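/- arXiv:2212.10945 — 4 statements merged into one kernel-verified Lean document; each statement's English description precedes it below -/
import Mathlib

section
/- Along trajectories of the planar system (ẋ, ẏ) = v_L(x,y), the Lyapunov function L₁(r) = ½(r^β − r_d^β)² satisfies dL₁/dt = −(2β v_d r^(β−1) / (r^β + r_d^β)) · L₁(r) ≤ 0, where r(t) = √(x(t)² + y(t)²). -/
noncomputable def vL (vd rd : ℝ) (β : ℕ) (x y : ℝ) : ℝ × ℝ :=
  let r := Real.sqrt (x ^ 2 + y ^ 2)
  ((-vd / (r * (r ^ β + rd ^ β))) *
      (x * (r ^ β - rd ^ β) + 2 * y * Real.sqrt (r ^ β * rd ^ β)),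
   (-vd / (r * (r ^ β + rd ^ β))) *
      (y * (r ^ β - rd ^ β) - 2 * x * Real.sqrt (r ^ β * rd ^ β)))

/-- Along trajectories of `(ẋ, ẏ) = v_L(x, y)`, the Lyapunov function
`L₁(r) = ½ (r^β - r_d^β)²` satisfies
`dL₁/dt = -(2 β v_d r^(β-1) / (r^β + r_d^β)) · L₁(r) ≤ 0`. -/
theorem stmt1 (vd rd : ℝ) (β : ℕ) (hvd : 0 < vd) (hrd : 0 < rd) (hβ : 1 ≤ β)
    (x y : ℝ → ℝ) (t : ℝ)
    (r : ℝ → ℝ) (hr : ∀ s, r s = Real.sqrt (x s ^ 2 + y s ^ 2))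
    (L₁ : ℝ → ℝ) (hL : ∀ s, L₁ s = (1 / 2) * (r s ^ β - rd ^ β) ^ 2)
    (hrpos : 0 < r t)
    (hx : HasDerivAt x (vL vd rd β (x t) (y t)).1 t)
    (hy : HasDerivAt y (vL vd rd β (x t) (y t)).2 t) :
    HasDerivAt L₁ (-(2 * β * vd * r t ^ (β - 1) / (r t ^ β + rd ^ β)) * L₁ t) t ∧
      -(2 * β * vd * r t ^ (β - 1) / (r t ^ β + rd ^ β)) * L₁ t ≤ 0 := by
  have hrfun : r = fun s => Real.sqrt (x s ^ 2 + y s ^ 2) := funext hr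
  have hLfun : L₁ = fun s => (1 / 2) * (r s ^ β - rd ^ β) ^ 2 := funext hL
  have hrt : r t = Real.sqrt (x t ^ 2 + y t ^ 2) := hr t
  have hfpos : 0 < x t ^ 2 + y t ^ 2 := by
    by_contra h
    push_neg at h
    rw [hrt, Real.sqrt_eq_zero'.mpr h] at hrpos
    exact lt_irrefl 0 hrpos
  have hrne : r t ≠ 0 := ne_of_gt hrpos
  have hsum : 0 < r t ^ β + rd ^ β := by positivity
  have hsumne : r t ^ β + rd ^ β ≠ 0 := ne_of_gt hsum
  set vx := (vL vd rd β (x t) (y t)).1 with hvx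
  set vy := (vL vd rd β (x t) (y t)).2 with hvy
  have hf : HasDerivAt (fun s => x s ^ 2 + y s ^ 2)
      (2 * x t ^ 1 * vx + 2 * y t ^ 1 * vy) t := by
    have := (hx.pow 2).add (hy.pow 2)
    exact this.congr_deriv (by norm_num)
  have hrd' : HasDerivAt r ((2 * x t ^ 1 * vx + 2 * y t ^ 1 * vy) /
      (2 * Real.sqrt (x t ^ 2 + y t ^ 2))) t := by
    rw [hrfun]
    exact (Real.hasDerivAt_sqrt (ne_of_gt hfpos)).comp t hf |>.congr_deriv (by ring)
  set r' := (2 * x t ^ 1 * vx + 2 * y t ^ 1 * vy) / (2 * Real.sqrt (x t ^ 2 + y t ^ 2))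
    with hr'def
  have hL1 : HasDerivAt L₁
      ((1/2) * (2 * (r t ^ β - rd ^ β) ^ 1 * (β * r t ^ (β - 1) * r'))) t := by
    rw [hLfun]
    exact (((hrd'.pow β).sub_const _).pow 2).const_mul _
  have hr2 : r t ^ 2 = x t ^ 2 + y t ^ 2 := by
    rw [hrt]; exact Real.sq_sqrt (le_of_lt hfpos)
  have hβ1 : β - 1 + 1 = β := Nat.succ_pred_eq_of_pos hβ
  have hrpow : r t ^ β = r t ^ (β - 1) * r t := by
    conv_lhs => rw [← hβ1, pow_succ]
  have key : x t * vx + y t * vy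
      = (-vd / (r t * (r t ^ β + rd ^ β))) * ((x t ^ 2 + y t ^ 2) * (r t ^ β - rd ^ β)) := by
    rw [hvx, hvy]; simp only [vL, ← hrt]; ring
  have hr'val : r' = -vd * (r t ^ β - rd ^ β) / (r t ^ β + rd ^ β) := by
    rw [hr'def, ← hrt]
    rw [show 2 * x t ^ 1 * vx + 2 * y t ^ 1 * vy = 2 * (x t * vx + y t * vy) by ring, key,
      ← hr2]
    field_simp
  have hderiv_eq : (1/2) * (2 * (r t ^ β - rd ^ β) ^ 1 * (β * r t ^ (β - 1) * r'))
      = -(2 * β * vd * r t ^ (β - 1) / (r t ^ β + rd ^ β)) * L₁ t := by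
    rw [hL t, hr'val]
    field_simp
  refine ⟨hderiv_eq ▸ hL1, ?_⟩
  have hL1nn : 0 ≤ L₁ t := by rw [hL t]; positivity
  have : 0 ≤ 2 * β * vd * r t ^ (β - 1) / (r t ^ β + rd ^ β) := by positivity
  have := mul_nonneg this hL1nn
  linarith
end

section
/- Consider the scalar ODE ṙ = −v_d (r^β − r_d^β)/(r^β + r_d^β) with r(0) > 0. Then r(t) > 0 for all t ≥ 0 and r(t) converges to r_d as t → ∞. -/
open Filter Topology

lemma stmt4_key_num (rd : ℝ) (hrd : 0 < rd) {β : ℕ} (hβ : 1 ≤ β) {x : ℝ} (hx : 0 ≤ x) :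
    rd ^ (β - 1) * (x - rd) ^ 2 ≤ (x - rd) * (x ^ β - rd ^ β) := by
  rw [← geom_sum₂_mul x rd β]
  have h1 : rd ^ (β - 1) ≤ ∑ i ∈ Finset.range β, x ^ i * rd ^ (β - 1 - i) := by
    have := Finset.single_le_sum (f := fun i => x ^ i * rd ^ (β - 1 - i))
      (fun i _ => by positivity) (Finset.mem_range.2 (by omega) : (0 : ℕ) ∈ Finset.range β)
    simpa using this
  calc rd ^ (β - 1) * (x - rd) ^ 2
      ≤ (∑ i ∈ Finset.range β, x ^ i * rd ^ (β - 1 - i)) * (x - rd) ^ 2 :=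
        mul_le_mul_of_nonneg_right h1 (sq_nonneg _)
    _ = (x - rd) * ((∑ i ∈ Finset.range β, x ^ i * rd ^ (β - 1 - i)) * (x - rd)) := by ring

lemma stmt4_aux (vd rd : ℝ) (hvd : 0 < vd) (hrd : 0 < rd) {β : ℕ} (hβ : 1 ≤ β)
    {x M a : ℝ} (hx : 0 ≤ x) (hxM : x ≤ M) (ha0 : 0 ≤ a) (ha : a ≤ (x - rd) ^ 2) :
    2 * (x - rd) * (-vd * (x ^ β - rd ^ β) / (x ^ β + rd ^ β))
      ≤ -(2 * vd * (rd ^ (β - 1) * a) / (M ^ β + rd ^ β)) := by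
  have hM0 : 0 ≤ M := hx.trans hxM
  have hD : 0 < x ^ β + rd ^ β := by positivity
  have hDM : 0 < M ^ β + rd ^ β := by positivity
  have hDle : x ^ β + rd ^ β ≤ M ^ β + rd ^ β := by gcongr
  have hN : rd ^ (β - 1) * a ≤ (x - rd) * (x ^ β - rd ^ β) :=
    le_trans (mul_le_mul_of_nonneg_left ha (by positivity)) (stmt4_key_num rd hrd hβ hx)
  have hN0 : 0 ≤ (x - rd) * (x ^ β - rd ^ β) := le_trans (by positivity) hN
  have hEq : 2 * (x - rd) * (-vd * (x ^ β - rd ^ β) / (x ^ β + rd ^ β))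
      = -(2 * vd * ((x - rd) * (x ^ β - rd ^ β)) / (x ^ β + rd ^ β)) := by ring
  rw [hEq, neg_le_neg_iff]
  calc 2 * vd * (rd ^ (β - 1) * a) / (M ^ β + rd ^ β)
      ≤ 2 * vd * ((x - rd) * (x ^ β - rd ^ β)) / (M ^ β + rd ^ β) := by gcongr
    _ ≤ 2 * vd * ((x - rd) * (x ^ β - rd ^ β)) / (x ^ β + rd ^ β) := by
        apply div_le_div_of_nonneg_left (by positivity) hD hDle

/-- For the scalar ODE `ṙ = -v_d (r^β - r_d^β)/(r^β + r_d^β)` with `r(0) > 0`,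
the solution stays positive and converges to `r_d` as `t → ∞`. -/
theorem stmt4 (vd rd : ℝ) (β : ℕ) (hvd : 0 < vd) (hrd : 0 < rd) (hβ : 1 ≤ β)
    (r : ℝ → ℝ)
    (hode : ∀ t, 0 ≤ t →
      HasDerivAt r (-vd * (r t ^ β - rd ^ β) / (r t ^ β + rd ^ β)) t)
    (h0 : 0 < r 0) :
    (∀ t, 0 ≤ t → 0 < r t) ∧
      Tendsto r atTop (nhds rd) := by
  set ε : ℝ := min (r 0) rd / 2 with hεdef
  have hε0 : 0 < ε := by positivity
  have hεr0 : ε < r 0 := by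
    simp only [hεdef]; rcases le_total (r 0) rd with h | h <;>
      simp [min_eq_left, min_eq_right, h] <;> linarith
  have hεrd : ε < rd := by
    simp only [hεdef]; rcases le_total (r 0) rd with h | h <;>
      simp [min_eq_left, min_eq_right, h] <;> linarith
  have hc : ∀ u : ℝ, 0 ≤ u → ContinuousAt r u := fun u hu => (hode u hu).continuousAt
  -- Step 1: positivity barrier
  have hpos : ∀ t, 0 ≤ t → ε < r t := by
    intro t₁ ht₁
    by_contra hcon
    push_neg at hcon
    set S : Set ℝ := {u | u ∈ Set.Icc 0 t₁ ∧ r u ≤ ε} with hSdef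
    have hSne : S.Nonempty := ⟨t₁, ⟨⟨ht₁, le_refl _⟩, hcon⟩⟩
    have hSbdd : BddBelow S := ⟨0, fun u hu => hu.1.1⟩
    have hrc : ContinuousOn r (Set.Icc 0 t₁) := fun u hu => (hc u hu.1).continuousWithinAt
    have hScl : IsClosed S := by
      have hSeq : S = Set.Icc 0 t₁ ∩ r ⁻¹' Set.Iic ε := by
        ext u; simp [hSdef, Set.mem_Icc, and_assoc]
      rw [hSeq]
      exact hrc.preimage_isClosed_of_isClosed isClosed_Icc isClosed_Iic
    set s : ℝ := sInf S with hsdef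
    have hsS : s ∈ S := hScl.csInf_mem hSne hSbdd
    have hs0 : 0 ≤ s := hsS.1.1
    have hslt : ∀ u, 0 ≤ u → u < s → ε < r u := by
      intro u hu hus
      by_contra h
      push_neg at h
      exact absurd (csInf_le hSbdd ⟨⟨hu, hus.le.trans hsS.1.2⟩, h⟩) (not_le.2 hus)
    have hs_pos : 0 < s := hs0.lt_of_ne fun h => ((h ▸ hεr0).not_ge hsS.2)
    have hrs : r s = ε := by
      refine le_antisymm hsS.2 ?_
      have ht : Tendsto r (𝓝[<] s) (𝓝 (r s)) := ((hc s hs0).continuousWithinAt).tendsto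
      refine ge_of_tendsto ht ?_
      filter_upwards [Ioo_mem_nhdsLT_of_mem (⟨hs_pos, le_refl s⟩ : s ∈ Set.Ioc 0 s)] with u hu
      exact (hslt u hu.1.le hu.2).le
    have hds := hode s hs0
    rw [hrs] at hds
    have hfpos : 0 < -vd * (ε ^ β - rd ^ β) / (ε ^ β + rd ^ β) := by
      have h1 : ε ^ β < rd ^ β := pow_lt_pow_left₀ hεrd hε0.le (by omega)
      exact div_pos (mul_pos_of_neg_of_neg (by linarith) (by linarith)) (by positivity)
    rw [hasDerivAt_iff_tendsto_slope] at hds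
    have h1 : ∀ᶠ u in 𝓝[<] s, 0 < slope r s u :=
      (hds.eventually (eventually_gt_nhds hfpos)).filter_mono
        (nhdsWithin_mono s fun u hu => ne_of_lt hu)
    have h2 : ∀ᶠ u in 𝓝[<] s, u ∈ Set.Ioo 0 s :=
      eventually_of_mem (Ioo_mem_nhdsLT_of_mem (⟨hs_pos, le_refl s⟩ : s ∈ Set.Ioc 0 s))
        fun u hu => hu
    obtain ⟨u, hu1, hu2⟩ := (h1.and h2).exists
    rw [slope_def_field] at hu1
    have hus : u - s < 0 := sub_neg.2 hu2.2
    have hru : r u < r s := by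
      by_contra h
      push_neg at h
      have : (r u - r s) / (u - s) ≤ 0 := div_nonpos_of_nonneg_of_nonpos (by linarith) hus.le
      linarith
    have := hslt u hu2.1.le hu2.2
    rw [hrs] at hru
    linarith
  -- Step 2: the Lyapunov function V = (r - rd)^2
  set V : ℝ → ℝ := fun t => (r t - rd) ^ 2 with hVdef
  have hV : ∀ t, 0 ≤ t → HasDerivAt V
      (2 * (r t - rd) * (-vd * (r t ^ β - rd ^ β) / (r t ^ β + rd ^ β))) t := by
    intro t ht
    have h := ((hode t ht).sub_const rd).pow 2
    refine h.congr_deriv ?_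
    push_cast
    ring
  have hVc : ContinuousOn V (Set.Ici 0) := fun t ht => (hV t ht).continuousAt.continuousWithinAt
  have hVd : DifferentiableOn ℝ V (interior (Set.Ici (0:ℝ))) := by
    rw [interior_Ici]
    exact fun t ht => ((hV t (le_of_lt ht)).differentiableAt).differentiableWithinAt
  have hVanti : AntitoneOn V (Set.Ici 0) := by
    refine antitoneOn_of_deriv_nonpos (convex_Ici 0) hVc hVd ?_
    intro t ht
    rw [interior_Ici] at ht
    rw [(hV t ht.le).deriv]
    have := stmt4_aux vd rd hvd hrd hβ (le_of_lt (hε0.trans (hpos t ht.le)))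
      (le_refl (r t)) (le_refl 0) (sq_nonneg (r t - rd))
    simpa using this
  -- boundedness
  have hM : ∀ t, 0 ≤ t → r t ≤ rd + |r 0 - rd| := by
    intro t ht
    have hVle : V t ≤ V 0 := hVanti (Set.self_mem_Ici) ht ht
    simp only [hVdef] at hVle
    nlinarith [sq_abs (r 0 - rd), abs_nonneg (r 0 - rd)]
  -- Step 3: V eventually drops below any positive level
  have key : ∀ a : ℝ, 0 < a → ∃ T, 0 ≤ T ∧ V T ≤ a := by
    intro a ha
    by_contra hcon
    push_neg at hcon
    set M : ℝ := rd + |r 0 - rd| with hMdef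
    have hM0 : 0 < M := by positivity
    set δ : ℝ := 2 * vd * (rd ^ (β - 1) * a) / (M ^ β + rd ^ β) with hδdef
    have hδ : 0 < δ := by positivity
    set W : ℝ → ℝ := fun t => V t + δ * t with hWdef
    have hWder : ∀ t, 0 ≤ t → HasDerivAt W
        (2 * (r t - rd) * (-vd * (r t ^ β - rd ^ β) / (r t ^ β + rd ^ β)) + δ) t := by
      intro t ht
      have h2 : HasDerivAt (fun x : ℝ => δ * x) δ t := by
        simpa using (hasDerivAt_id t).const_mul δ
      exact (hV t ht).add h2
    have hWanti : AntitoneOn W (Set.Ici 0) := by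
      refine antitoneOn_of_deriv_nonpos (convex_Ici 0)
        (fun t ht => (hWder t ht).continuousAt.continuousWithinAt) ?_ ?_
      · rw [interior_Ici]
        exact fun t ht => ((hWder t (le_of_lt ht)).differentiableAt).differentiableWithinAt
      · intro t ht
        rw [interior_Ici] at ht
        rw [(hWder t ht.le).deriv]
        have hb := stmt4_aux vd rd hvd hrd hβ (le_of_lt (hε0.trans (hpos t ht.le)))
          (hM t ht.le) ha.le (le_of_lt (hcon t ht.le))
        linarith [hb, hδdef.le, hδdef.ge]
    set T : ℝ := (V 0 + 1) / δ with hTdef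
    have hT0 : 0 ≤ T := by
      have : 0 ≤ V 0 := sq_nonneg _
      positivity
    have hWT : W T ≤ W 0 := hWanti (Set.self_mem_Ici) hT0 hT0
    have hδT : δ * T = V 0 + 1 := by
      rw [hTdef]; field_simp
    simp only [hWdef, mul_zero, add_zero] at hWT
    have hVT : 0 ≤ V T := sq_nonneg _
    linarith
  -- Step 4: conclusion
  refine ⟨fun t ht => lt_trans hε0 (hpos t ht), ?_⟩
  rw [Metric.tendsto_atTop]
  intro e he
  obtain ⟨T, hT0, hTa⟩ := key (e ^ 2 / 2) (by positivity)
  refine ⟨T, fun t ht => ?_⟩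
  have h1 : V t ≤ e ^ 2 / 2 := le_trans (hVanti hT0 (hT0.trans ht) ht) hTa
  rw [Real.dist_eq]
  have h2 : |r t - rd| = Real.sqrt (V t) := by
    rw [hVdef]; exact (Real.sqrt_sq_eq_abs _).symm
  rw [h2]
  refine (Real.sqrt_lt' he).2 ?_
  nlinarith
end

section
/- Consider the discrete-time system δ(k+1) = δ(k) − c₁ · sat(δ(k)/c₂), where sat is the standard saturation function. If 0 < c₂ < c₁ < 2c₂, then δ(k) → 0 as k → ∞ for any initial condition δ(0) ∈ ℝ. -/
open Filter

/-- The standard saturation function. -/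
noncomputable def sat (r : ℝ) : ℝ :=
  if r > 1 then 1 else if r < -1 then -1 else r

/-- For the recursion `δ(k+1) = δ(k) - c₁ sat(δ(k)/c₂)` with `0 < c₂ < c₁ < 2c₂`,
the error `δ(k)` converges to `0` from any initial condition. -/
theorem stmt8 (c₁ c₂ : ℝ) (h1 : 0 < c₂) (h2 : c₂ < c₁) (h3 : c₁ < 2 * c₂)
    (δ : ℕ → ℝ) (hrec : ∀ k, δ (k + 1) = δ k - c₁ * sat (δ k / c₂)) :
    Tendsto δ atTop (nhds 0) := by
  set q : ℝ := |1 - c₁ / c₂| with hq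
  have hq0 : 0 ≤ q := abs_nonneg _
  have hq1 : q < 1 := by
    rw [hq, abs_lt]
    have hA : 1 < c₁ / c₂ := (one_lt_div h1).mpr h2
    have hB : c₁ / c₂ < 2 := (div_lt_iff₀ h1).mpr (by linarith)
    constructor <;> linarith
  have step_band : ∀ x : ℝ, |x| ≤ c₂ → |x - c₁ * sat (x / c₂)| ≤ q * |x| := by
    intro x hx
    have hx1 : x / c₂ ≤ 1 := by rw [div_le_one h1]; exact (abs_le.mp hx).2
    have hx2 : -1 ≤ x / c₂ := by
      rw [le_div_iff₀ h1]; have := (abs_le.mp hx).1; linarith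
    have hsat : sat (x / c₂) = x / c₂ := by
      unfold sat
      rw [if_neg (not_lt.mpr hx1), if_neg (not_lt.mpr hx2)]
    rw [hsat]
    have : x - c₁ * (x / c₂) = x * (1 - c₁ / c₂) := by field_simp
    rw [this, abs_mul, mul_comm]
  have step_out : ∀ x : ℝ, c₂ < |x| →
      |x - c₁ * sat (x / c₂)| ≤ |x| - c₂ ∨ |x - c₁ * sat (x / c₂)| ≤ c₂ := by
    intro x hx
    rcases le_or_gt 0 x with hx0 | hx0
    · have hxa : |x| = x := abs_of_nonneg hx0
      have hgt : 1 < x / c₂ := by rw [lt_div_iff₀ h1]; rw [hxa] at hx; linarith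
      have hsat : sat (x / c₂) = 1 := by unfold sat; rw [if_pos hgt]
      rw [hsat, mul_one, hxa]
      rcases le_or_gt c₁ x with hc | hc
      · left; rw [abs_of_nonneg (by linarith)]; linarith
      · right; rw [abs_of_neg (by linarith)]; linarith
    · have hxa : |x| = -x := abs_of_neg hx0
      have hlt : x / c₂ < -1 := by rw [div_lt_iff₀ h1]; rw [hxa] at hx; linarith
      have hsat : sat (x / c₂) = -1 := by
        unfold sat
        rw [if_neg (by intro h; linarith), if_pos hlt]
      rw [hsat, hxa]
      rcases le_or_gt x (-c₁) with hc | hc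
      · left; rw [show x - c₁ * (-1) = x + c₁ by ring, abs_of_nonpos (by linarith)]
        linarith
      · right; rw [show x - c₁ * (-1) = x + c₁ by ring, abs_of_pos (by linarith)]
        linarith
  -- the orbit eventually enters the band
  have key : ∀ m : ℕ, |δ m| ≤ c₂ ∨ |δ m| ≤ |δ 0| - m * c₂ := by
    intro m
    induction m with
    | zero => right; simp
    | succ m ih =>
      rcases le_or_gt (|δ m|) c₂ with hb | hb
      · left
        rw [hrec]
        have := step_band (δ m) hb
        nlinarith [abs_nonneg (δ m)]
      · rcases ih with h | h
        · exact absurd h (not_le.mpr hb)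
        · rw [hrec]
          rcases step_out (δ m) hb with h' | h'
          · right; push_cast; linarith
          · left; exact h'
  have reach : ∃ N, |δ N| ≤ c₂ := by
    obtain ⟨n, hn⟩ := exists_nat_gt (|δ 0| / c₂)
    refine ⟨n, ?_⟩
    rcases key n with h | h
    · exact h
    · exfalso
      have h0 : |δ 0| < n * c₂ := by rwa [div_lt_iff₀ h1] at hn
      have := abs_nonneg (δ n)
      linarith
  obtain ⟨N, hN⟩ := reach
  have decay : ∀ n : ℕ, |δ (N + n)| ≤ c₂ * q ^ n := by
    intro n
    induction n with
    | zero => simpa using hN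
    | succ n ih =>
      have hqn : q ^ n ≤ 1 := pow_le_one₀ hq0 hq1.le
      have hb : |δ (N + n)| ≤ c₂ := le_trans ih (by nlinarith)
      have : |δ (N + n + 1)| ≤ q * |δ (N + n)| := by
        rw [hrec]; exact step_band _ hb
      calc |δ (N + (n + 1))| = |δ (N + n + 1)| := by ring_nf
        _ ≤ q * |δ (N + n)| := this
        _ ≤ q * (c₂ * q ^ n) := by exact mul_le_mul_of_nonneg_left ih hq0
        _ = c₂ * q ^ (n + 1) := by ring
  have hg : Tendsto (fun n : ℕ => c₂ * q ^ n) atTop (nhds 0) := by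
    have := (tendsto_pow_atTop_nhds_zero_of_lt_one hq0 hq1).const_mul c₂
    simpa using this
  have hshift : Tendsto (fun n : ℕ => δ (N + n)) atTop (nhds 0) :=
    squeeze_zero_norm (fun n => by simpa using decay n) hg
  have : Tendsto (fun n : ℕ => δ (n + N)) atTop (nhds 0) := by
    simpa [add_comm] using hshift
  exact (tendsto_add_atTop_iff_nat N).mp this
end

section
/- For the recursion δ(k+1) = δ(k) − c₁ sat(δ(k)/c₂) with 0 < c₂ < c₁ < 2c₂: the interval [−c₂, c₂] is reached in finitely many steps from any initial δ(0), and is forward invariant; specifically if δ(k) ≥ c₂ then δ(k+1) = δ(k) − c₁ < δ(k), and once |δ(k)| ≤ c₂ then |δ(j)| ≤ c₂ for all j ≥ k. -/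
lemma sat_ge_one (r : ℝ) (h : 1 ≤ r) : sat r = 1 := by
  unfold sat; split_ifs with h1 h2 <;> linarith

lemma sat_le_neg_one (r : ℝ) (h : r ≤ -1) : sat r = -1 := by
  unfold sat; split_ifs with h1 h2 <;> linarith

lemma sat_mid (r : ℝ) (h : |r| ≤ 1) : sat r = r := by
  rw [abs_le] at h
  unfold sat; split_ifs with h1 h2 <;> linarith

/-- For the recursion `δ(k+1) = δ(k) - c₁ sat(δ(k)/c₂)` with `0 < c₂ < c₁ < 2c₂`:
if `δ(k) ≥ c₂` then `δ(k+1) = δ(k) - c₁ < δ(k)`; the interval `[-c₂, c₂]` is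
forward invariant; and it is reached in finitely many steps from any `δ(0)`. -/
theorem stmt10 (c₁ c₂ : ℝ) (h1 : 0 < c₂) (h2 : c₂ < c₁) (h3 : c₁ < 2 * c₂)
    (δ : ℕ → ℝ) (hrec : ∀ k, δ (k + 1) = δ k - c₁ * sat (δ k / c₂)) :
    (∀ k, c₂ ≤ δ k → δ (k + 1) = δ k - c₁ ∧ δ (k + 1) < δ k) ∧
      (∀ k, |δ k| ≤ c₂ → ∀ j, k ≤ j → |δ j| ≤ c₂) ∧
      (∃ k, |δ k| ≤ c₂) := by
  have hdec : ∀ k, c₂ ≤ δ k → δ (k + 1) = δ k - c₁ := by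
    intro k hk
    have hs : sat (δ k / c₂) = 1 := sat_ge_one _ (by rw [le_div_iff₀ h1]; linarith)
    rw [hrec k, hs]; ring
  have hinc : ∀ k, δ k ≤ -c₂ → δ (k + 1) = δ k + c₁ := by
    intro k hk
    have hs : sat (δ k / c₂) = -1 := sat_le_neg_one _ (by rw [div_le_iff₀ h1]; linarith)
    rw [hrec k, hs]; ring
  have hstep : ∀ k, |δ k| ≤ c₂ → |δ (k + 1)| ≤ c₂ := by
    intro k hk
    have habs : |δ k / c₂| ≤ 1 := by
      rw [abs_div, abs_of_pos h1, div_le_one h1]; exact hk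
    have hs : sat (δ k / c₂) = δ k / c₂ := sat_mid _ habs
    rw [hrec k, hs]
    rw [abs_le] at hk ⊢
    have h4 : δ k - c₁ * (δ k / c₂) = δ k * (c₂ - c₁) / c₂ := by field_simp
    rw [h4]
    constructor
    · rw [le_div_iff₀ h1]; nlinarith
    · rw [div_le_iff₀ h1]; nlinarith
  refine ⟨fun k hk => ⟨hdec k hk, by have := hdec k hk; linarith⟩, ?_, ?_⟩
  · intro k hk j hkj
    induction j with
    | zero => simpa [Nat.le_zero.mp hkj] using hk
    | succ n ih =>
      rcases Nat.lt_or_ge k (n + 1) with h | h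
      · exact hstep n (ih (Nat.lt_succ_iff.mp h))
      · have : k = n + 1 := le_antisymm hkj h
        simpa [this] using hk
  · by_contra hcon
    push_neg at hcon
    rcases lt_or_ge c₂ (δ 0) with h0 | h0
    · -- δ stays above c₂ and decreases by c₁ each step
      have key : ∀ k, c₂ < δ k ∧ δ k = δ 0 - k * c₁ := by
        intro k
        induction k with
        | zero => simp [h0]
        | succ n ih =>
          obtain ⟨hgt, heq⟩ := ih
          have hd := hdec n hgt.le
          have hgt' : c₂ < δ (n + 1) := by
            rcases lt_or_ge c₂ (δ (n + 1)) with h | h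
            · exact h
            · exact absurd (abs_le.mpr ⟨by rw [hd]; linarith, h⟩) (hcon (n + 1)).not_ge
          exact ⟨hgt', by rw [hd, heq]; push_cast; ring⟩
      obtain ⟨n, hn⟩ := Archimedean.arch (δ 0 - c₂) (show (0:ℝ) < c₁ by linarith)
      have := (key n).1
      have heq := (key n).2
      simp only [nsmul_eq_mul] at hn
      rw [heq] at this
      linarith
    · rcases lt_or_ge (δ 0) (-c₂) with h0' | h0'
      · have key : ∀ k, δ k < -c₂ ∧ δ k = δ 0 + k * c₁ := by
          intro k
          induction k with
          | zero => simp [h0']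
          | succ n ih =>
            obtain ⟨hlt, heq⟩ := ih
            have hd := hinc n hlt.le
            have hlt' : δ (n + 1) < -c₂ := by
              rcases lt_or_ge (δ (n + 1)) (-c₂) with h | h
              · exact h
              · exact absurd (abs_le.mpr ⟨h, by rw [hd]; linarith⟩) (hcon (n + 1)).not_ge
            exact ⟨hlt', by rw [hd, heq]; push_cast; ring⟩
        obtain ⟨n, hn⟩ := Archimedean.arch (-c₂ - δ 0) (show (0:ℝ) < c₁ by linarith)
        have := (key n).1
        have heq := (key n).2
        simp only [nsmul_eq_mul] at hn
        rw [heq] at this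
        linarith
      · exact absurd (abs_le.mpr ⟨h0', h0⟩) (hcon 0).not_ge
end
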